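/- arXiv:1612.08221 — 5 statements merged into one kernel-verified Lean document; each statement's English description precedes it below -/
import Mathlib

section
/- If g : [0,1] → [0,1] is continuous and I, J are closed subintervals with J ⊆ g(I), then there exists a closed subinterval Q ⊆ I with g(Q) = J. -/
open Set

/-- Helper: if `g u = c`, `g v = d` with `u ≤ v`, `c ≤ d`, then some subinterval of
`[u,v]` maps exactly onto `[c,d]`. -/
lemma helper_exists_onto (g : ℝ → ℝ) (u v c d : ℝ) (huv : u ≤ v) (hcd : c ≤ d)
    (hg : ContinuousOn g (Icc u v)) (hu : g u = c) (hv : g v = d) :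
    ∃ p q : ℝ, u ≤ p ∧ p ≤ q ∧ q ≤ v ∧ g '' Icc p q = Icc c d := by
  -- S : points of [u,v] mapping to c
  set S : Set ℝ := Icc u v ∩ g ⁻¹' {c} with hSdef
  have hSclosed : IsClosed S := hg.preimage_isClosed_of_isClosed isClosed_Icc isClosed_singleton
  have hScpt : IsCompact S :=
    isCompact_Icc.of_isClosed_subset hSclosed inter_subset_left
  have hSne : S.Nonempty := ⟨u, ⟨le_refl u, huv⟩, by simpa using hu⟩
  set p := sSup S with hp
  have hpS : p ∈ S := hScpt.sSup_mem hSne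
  obtain ⟨hpIcc, hpc⟩ := hpS
  have hgp : g p = c := hpc
  -- T : points of [p,v] mapping to d
  set T : Set ℝ := Icc p v ∩ g ⁻¹' {d} with hTdef
  have hgT : ContinuousOn g (Icc p v) := hg.mono (Icc_subset_Icc hpIcc.1 le_rfl)
  have hTclosed : IsClosed T := hgT.preimage_isClosed_of_isClosed isClosed_Icc isClosed_singleton
  have hTcpt : IsCompact T :=
    isCompact_Icc.of_isClosed_subset hTclosed inter_subset_left
  have hTne : T.Nonempty := ⟨v, ⟨hpIcc.2, le_refl v⟩, by simpa using hv⟩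
  set q := sInf T with hq
  have hqT : q ∈ T := hTcpt.sInf_mem hTne
  obtain ⟨hqIcc, hqd⟩ := hqT
  have hgq : g q = d := hqd
  have hpq : p ≤ q := hqIcc.1
  refine ⟨p, q, hpIcc.1, hpq, hqIcc.2, ?_⟩
  have hsub : Icc p q ⊆ Icc u v := Icc_subset_Icc hpIcc.1 hqIcc.2
  have hgpq : ContinuousOn g (Icc p q) := hg.mono hsub
  apply Subset.antisymm
  · -- g '' [p,q] ⊆ [c,d]
    rintro y ⟨t, htpq, rfl⟩
    constructor
    · by_contra hlt
      push_neg at hlt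
      -- g t < c; find s ∈ [t,q] with g s = c, then s ∈ S so s ≤ p ≤ t ≤ s
      have hIVT := intermediate_value_Icc htpq.2 (hgpq.mono (Icc_subset_Icc htpq.1 le_rfl))
      have hc : c ∈ Icc (g t) (g q) := ⟨le_of_lt hlt, hgq ▸ hcd⟩
      obtain ⟨s, hs, hgs⟩ := hIVT hc
      have hsS : s ∈ S := ⟨⟨le_trans hpIcc.1 (le_trans htpq.1 hs.1),
        le_trans hs.2 hqIcc.2⟩, by simpa using hgs⟩
      have hsp : s ≤ p := le_csSup hScpt.bddAbove hsS
      have : t = p := le_antisymm (le_trans hs.1 hsp) htpq.1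
      exact absurd (this ▸ hgp) (ne_of_lt hlt)
    · by_contra hlt
      push_neg at hlt
      -- g t > d; find s ∈ [p,t] with g s = d, then q ≤ s ≤ t ≤ q
      have hIVT := intermediate_value_Icc htpq.1 (hgpq.mono (Icc_subset_Icc le_rfl htpq.2))
      have hd : d ∈ Icc (g p) (g t) := ⟨hgp ▸ hcd, le_of_lt hlt⟩
      obtain ⟨s, hs, hgs⟩ := hIVT hd
      have hsT : s ∈ T := ⟨⟨hs.1, le_trans hs.2 (le_trans htpq.2 hqIcc.2)⟩, by simpa using hgs⟩
      have hqs : q ≤ s := csInf_le hTcpt.bddBelow hsT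
      have : t = q := le_antisymm htpq.2 (le_trans hqs hs.2)
      exact absurd (this ▸ hgq) (ne_of_gt hlt)
  · -- [c,d] ⊆ g '' [p,q] by IVT
    have := intermediate_value_Icc hpq hgpq
    rw [hgp, hgq] at this
    exact this

theorem exists_subinterval_mapping_onto (g : ℝ → ℝ)
    (hg : ContinuousOn g (Icc 0 1)) (hmap : MapsTo g (Icc 0 1) (Icc 0 1))
    (a b c d : ℝ) (h0 : 0 ≤ a) (hab : a ≤ b) (h1 : b ≤ 1)
    (h0' : 0 ≤ c) (hcd : c ≤ d) (h1' : d ≤ 1)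
    (hcov : Icc c d ⊆ g '' Icc a b) :
    ∃ p q : ℝ, a ≤ p ∧ p ≤ q ∧ q ≤ b ∧ g '' Icc p q = Icc c d := by
  obtain ⟨x, hx, hgx⟩ := hcov ⟨le_refl c, hcd⟩
  obtain ⟨y, hy, hgy⟩ := hcov ⟨hcd, le_refl d⟩
  have hgab : ContinuousOn g (Icc a b) :=
    hg.mono (Icc_subset_Icc h0 h1)
  rcases le_total x y with hxy | hyx
  · obtain ⟨p, q, h₁, h₂, h₃, h₄⟩ :=
      helper_exists_onto g x y c d hxy hcd (hgab.mono (Icc_subset_Icc hx.1 hy.2)) hgx hgy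
    exact ⟨p, q, le_trans hx.1 h₁, h₂, le_trans h₃ hy.2, h₄⟩
  · -- flip: consider g₂ t = g (x + y - t) on [y, x]
    set g₂ : ℝ → ℝ := fun t => g (x + y - t) with hg₂
    have hmaps : MapsTo (fun t => x + y - t) (Icc y x) (Icc y x) := by
      intro t ht
      simp only [mem_Icc] at ht ⊢
      constructor <;> linarith
    have hg₂cont : ContinuousOn g₂ (Icc y x) := by
      apply (hgab.mono (Icc_subset_Icc hy.1 hx.2)).comp
        (Continuous.continuousOn (by continuity)) hmaps
    have hg₂y : g₂ y = c := by simp [hg₂, hgx]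
    have hg₂x : g₂ x = d := by simp [hg₂, hgy]
    obtain ⟨p, q, h₁, h₂, h₃, h₄⟩ :=
      helper_exists_onto g₂ y x c d hyx hcd hg₂cont hg₂y hg₂x
    refine ⟨x + y - q, x + y - p, by linarith [hy.1, hx.1], by linarith,
      by linarith [hx.2, hy.2], ?_⟩
    have himg : g₂ '' Icc p q = g '' ((fun t => x + y - t) '' Icc p q) := by
      rw [image_image]
    rw [himg, image_const_sub_Icc] at h₄
    exact h₄
end

section
/- If g : [0,1] → [0,1] is continuous and I₀, I₁, …, Iₘ is a finite sequence of closed subintervals such that Iᵢ₊₁ ⊆ g(Iᵢ) for all i < m and I₀ ⊆ Iₘ, then there exists x ∈ I₀ with gᵐ(x) = x and gⁱ(x) ∈ Iᵢ for all i ≤ m. -/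
open Set

/-- Exact covering, oriented version: if `f p = c`, `f q = d` with `p ≤ q`, `c ≤ d`,
then some subinterval of `[p,q]` maps exactly onto `[c,d]`. -/
lemma exact_cover_oriented {f : ℝ → ℝ} {p q c d : ℝ} (hpq : p ≤ q)
    (hf : ContinuousOn f (Icc p q)) (hcd : c ≤ d) (hp : f p = c) (hq : f q = d) :
    ∃ p' q', p ≤ p' ∧ p' ≤ q' ∧ q' ≤ q ∧ f '' Icc p' q' = Icc c d := by
  -- S : points of [p,q] hitting d
  set S : Set ℝ := {x ∈ Icc p q | f x = d} with hS
  have hSne : S.Nonempty := ⟨q, ⟨hpq, le_refl q⟩, hq⟩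
  have hSclosed : IsClosed S := by
    have : S = Icc p q ∩ f ⁻¹' {d} := by
      ext x
      simp only [hS, mem_setOf_eq, mem_inter_iff, mem_preimage, mem_singleton_iff]
    rw [this]
    exact hf.preimage_isClosed_of_isClosed isClosed_Icc isClosed_singleton
  have hSbdd : BddBelow S := ⟨p, fun x hx => hx.1.1⟩
  set q' := sInf S with hq'
  have hq'S : q' ∈ S := hSclosed.csInf_mem hSne hSbdd
  have hq'mem : q' ∈ Icc p q := hq'S.1
  have hfq' : f q' = d := hq'S.2
  -- S' : points of [p, q'] hitting c
  set S' : Set ℝ := {x ∈ Icc p q' | f x = c} with hS'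
  have hS'ne : S'.Nonempty := ⟨p, ⟨le_refl p, hq'mem.1⟩, hp⟩
  have hsubI : Icc p q' ⊆ Icc p q := Icc_subset_Icc le_rfl hq'mem.2
  have hS'closed : IsClosed S' := by
    have : S' = Icc p q' ∩ f ⁻¹' {c} := by
      ext x
      simp only [hS', mem_setOf_eq, mem_inter_iff, mem_preimage, mem_singleton_iff]
    rw [this]
    exact (hf.mono hsubI).preimage_isClosed_of_isClosed isClosed_Icc isClosed_singleton
  have hS'bdd : BddAbove S' := ⟨q', fun x hx => hx.1.2⟩
  set p' := sSup S' with hp'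
  have hp'S : p' ∈ S' := hS'closed.csSup_mem hS'ne hS'bdd
  have hp'mem : p' ∈ Icc p q' := hp'S.1
  have hfp' : f p' = c := hp'S.2
  refine ⟨p', q', hp'mem.1, hp'mem.2, hq'mem.2, ?_⟩
  have hsubK : Icc p' q' ⊆ Icc p q := Icc_subset_Icc hp'mem.1 hq'mem.2
  have hfK : ContinuousOn f (Icc p' q') := hf.mono hsubK
  apply Subset.antisymm
  · rintro y ⟨x, hx, rfl⟩
    constructor
    · by_contra h
      push_neg at h
      -- f x < c, IVT on [x, q'] gives y with f y = c, y ∈ S', y ≥ x, so x = y = p'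
      have hivt := intermediate_value_Icc hx.2 (hfK.mono (Icc_subset_Icc hx.1 le_rfl))
      have : c ∈ Icc (f x) (f q') := ⟨le_of_lt h, hfq' ▸ hcd⟩
      obtain ⟨y, hy, hfy⟩ := hivt this
      have hyS' : y ∈ S' := ⟨⟨le_trans hp'mem.1 (le_trans hx.1 hy.1), hy.2⟩, hfy⟩
      have : y ≤ p' := le_csSup hS'bdd hyS'
      have hxy : x = p' := le_antisymm (le_trans hy.1 this) hx.1
      rw [hxy, hfp'] at h
      exact lt_irrefl c h
    · by_contra h
      push_neg at h
      -- f x > d, IVT on [p', x] gives y with f y = d, y ≤ x < ...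
      have hivt := intermediate_value_Icc hx.1 (hfK.mono (Icc_subset_Icc le_rfl hx.2))
      have : d ∈ Icc (f p') (f x) := ⟨hfp' ▸ hcd, le_of_lt h⟩
      obtain ⟨y, hy, hfy⟩ := hivt this
      have hyS : y ∈ S := ⟨⟨le_trans hp'mem.1 hy.1, le_trans hy.2 (le_trans hx.2 hq'mem.2)⟩, hfy⟩
      have : q' ≤ y := csInf_le hSbdd hyS
      have hxy : x = q' := le_antisymm hx.2 (le_trans this hy.2)
      rw [hxy, hfq'] at h
      exact lt_irrefl d h
  · have := intermediate_value_Icc hp'mem.2 hfK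
    rw [hfp', hfq'] at this
    exact this

/-- Exact covering lemma. -/
lemma exact_cover {f : ℝ → ℝ} {p q c d : ℝ} (hpq : p ≤ q)
    (hf : ContinuousOn f (Icc p q)) (hcd : c ≤ d)
    (hcov : Icc c d ⊆ f '' Icc p q) :
    ∃ p' q', p ≤ p' ∧ p' ≤ q' ∧ q' ≤ q ∧ f '' Icc p' q' = Icc c d := by
  obtain ⟨u, hu, hfu⟩ := hcov (left_mem_Icc.2 hcd)
  obtain ⟨v, hv, hfv⟩ := hcov (right_mem_Icc.2 hcd)
  rcases le_total u v with huv | hvu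
  · obtain ⟨p', q', h1, h2, h3, h4⟩ :=
      exact_cover_oriented huv (hf.mono (Icc_subset_Icc hu.1 hv.2)) hcd hfu hfv
    exact ⟨p', q', le_trans hu.1 h1, h2, le_trans h3 hv.2, h4⟩
  · obtain ⟨p', q', h1, h2, h3, h4⟩ :=
      exact_cover_oriented (f := fun x => -(f x)) hvu
        ((hf.mono (Icc_subset_Icc hv.1 hu.2)).neg) (neg_le_neg hcd)
        (by simp [hfv]) (by simp [hfu])
    refine ⟨p', q', le_trans hv.1 h1, h2, le_trans h3 hu.2, ?_⟩
    have hneg : Neg.neg '' (f '' Icc p' q') = Icc (-d) (-c) := by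
      rw [← Set.image_comp]; exact h4
    have h5 := congrArg (Set.image Neg.neg) hneg
    rw [← Set.image_comp] at h5
    simpa using h5

theorem loop_periodic_point (g : ℝ → ℝ)
    (hg : ContinuousOn g (Icc 0 1)) (hmap : MapsTo g (Icc 0 1) (Icc 0 1))
    (m : ℕ) (a b : ℕ → ℝ)
    (hab : ∀ i ≤ m, a i ≤ b i)
    (hsub : ∀ i ≤ m, Icc (a i) (b i) ⊆ Icc (0:ℝ) 1)
    (hcov : ∀ i < m, Icc (a (i+1)) (b (i+1)) ⊆ g '' Icc (a i) (b i))
    (hloop : Icc (a 0) (b 0) ⊆ Icc (a m) (b m)) :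
    ∃ x ∈ Icc (a 0) (b 0), g^[m] x = x ∧ ∀ i ≤ m, g^[i] x ∈ Icc (a i) (b i) := by
  -- iterates are continuous and map [0,1] into itself
  have hiter : ∀ n, ContinuousOn (g^[n]) (Icc 0 1) ∧ MapsTo (g^[n]) (Icc 0 1) (Icc 0 1) := by
    intro n
    induction n with
    | zero => exact ⟨continuousOn_id, fun x hx => hx⟩
    | succ n ih =>
      rw [Function.iterate_succ']
      exact ⟨hg.comp ih.1 ih.2, hmap.comp ih.2⟩
  -- nested intervals construction
  have key : ∀ i ≤ m, ∃ u v, a 0 ≤ u ∧ u ≤ v ∧ v ≤ b 0 ∧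
      g^[i] '' Icc u v = Icc (a i) (b i) ∧
      ∀ j ≤ i, g^[j] '' Icc u v ⊆ Icc (a j) (b j) := by
    intro i
    induction i with
    | zero =>
      intro _
      refine ⟨a 0, b 0, le_rfl, hab 0 (Nat.zero_le m), le_rfl, by simp, ?_⟩
      intro j hj
      interval_cases j
      simp
    | succ i ih =>
      intro hi
      obtain ⟨u, v, h1, h2, h3, h4, h5⟩ := ih (le_of_lt (Nat.lt_of_succ_le hi))
      have hKsub : Icc u v ⊆ Icc (0:ℝ) 1 :=
        (Icc_subset_Icc h1 h3).trans (hsub 0 (Nat.zero_le m))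
      have hcont : ContinuousOn (g^[i+1]) (Icc u v) := (hiter (i+1)).1.mono hKsub
      have hcovi : Icc (a (i+1)) (b (i+1)) ⊆ g^[i+1] '' Icc u v := by
        rw [Function.iterate_succ', Function.comp_def]
        have := hcov i (Nat.lt_of_succ_le hi)
        rw [← h4] at this
        rw [show (fun x => g (g^[i] x)) '' Icc u v = g '' (g^[i] '' Icc u v) by
          rw [← Set.image_comp]; rfl]
        exact this
      obtain ⟨u', v', hu1, hu2, hu3, hu4⟩ :=
        exact_cover h2 hcont (hab (i+1) hi) hcovi
      refine ⟨u', v', le_trans h1 hu1, hu2, le_trans hu3 h3, hu4, ?_⟩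
      intro j hj
      rcases Nat.lt_succ_iff_lt_or_eq.mp (Nat.lt_succ_of_le hj) with hj' | rfl
      · calc g^[j] '' Icc u' v' ⊆ g^[j] '' Icc u v :=
              Set.image_mono (Icc_subset_Icc hu1 hu3)
          _ ⊆ Icc (a j) (b j) := h5 j (Nat.lt_succ_iff.mp hj')
      · rw [hu4]
  obtain ⟨u, v, h1, h2, h3, h4, h5⟩ := key m le_rfl
  -- fixed point of g^[m] in [u,v]
  have hKsub0 : Icc u v ⊆ Icc (a 0) (b 0) := Icc_subset_Icc h1 h3
  have hself : Icc u v ⊆ g^[m] '' Icc u v := by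
    rw [h4]; exact fun x hx => hloop (hKsub0 hx)
  obtain ⟨s, hs, hfs⟩ := hself (left_mem_Icc.2 h2)
  obtain ⟨t, ht, hft⟩ := hself (right_mem_Icc.2 h2)
  set h : ℝ → ℝ := fun x => g^[m] x - x with hh
  have hhc : ContinuousOn h (Icc u v) :=
    (((hiter m).1.mono ((Icc_subset_Icc h1 h3).trans (hsub 0 (Nat.zero_le m))))).sub continuousOn_id
  have huIcc : uIcc s t ⊆ Icc u v := Set.uIcc_subset_Icc hs ht
  have hivt := intermediate_value_uIcc (hhc.mono huIcc)
  have h0 : (0:ℝ) ∈ uIcc (h s) (h t) := by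
    have hs0 : h s ≤ 0 := by simp [hh, hfs]; exact hs.1
    have ht0 : 0 ≤ h t := by simp [hh, hft]; exact ht.2
    exact Set.mem_uIcc.2 (Or.inl ⟨hs0, ht0⟩)
  obtain ⟨x, hx, hhx⟩ := hivt h0
  have hxK : x ∈ Icc u v := huIcc hx
  have hfix : g^[m] x = x := by
    have : g^[m] x - x = 0 := hhx
    linarith
  refine ⟨x, hKsub0 hxK, hfix, ?_⟩
  intro i hi
  exact h5 i hi ⟨x, hxK, rfl⟩
end

section
/- If g : [0,1] → [0,1] is continuous and (Iᵢ)_{i∈ℕ} is an infinite sequence of closed subintervals with Iᵢ₊₁ ⊆ g(Iᵢ) for all i, then there exists a decreasing sequence of closed subintervals Q₀ ⊇ Q₁ ⊇ Q₂ ⊇ ⋯ with Q₀ = I₀ and gⁱ(Qᵢ) = Iᵢ for all i. -/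
open Set

/-- Key lemma: a continuous function on a closed interval admits a closed subinterval
mapping exactly onto `uIcc (f u) (f v)`. -/
lemma exists_Icc_image_eq_uIcc (f : ℝ → ℝ) {u v : ℝ} (huv : u ≤ v)
    (hf : ContinuousOn f (Icc u v)) :
    ∃ p q, u ≤ p ∧ p ≤ q ∧ q ≤ v ∧ f '' Icc p q = uIcc (f u) (f v) := by
  set S : Set ℝ := {x ∈ Icc u v | f x = f u} with hS
  have hSne : S.Nonempty := ⟨u, ⟨le_refl u, huv⟩, rfl⟩
  have hSclosed : IsClosed S := hf.preimage_isClosed_of_isClosed isClosed_Icc isClosed_singleton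
  have hSbdd : BddAbove S := ⟨v, fun x hx => hx.1.2⟩
  set p := sSup S with hp
  have hpS : p ∈ S := hSclosed.csSup_mem hSne hSbdd
  have hup : u ≤ p := hpS.1.1
  have hpv : p ≤ v := hpS.1.2
  have hfp : f p = f u := hpS.2
  set T : Set ℝ := {x ∈ Icc p v | f x = f v} with hT
  have hTne : T.Nonempty := ⟨v, ⟨hpv, le_refl v⟩, rfl⟩
  have hTclosed : IsClosed T :=
    (hf.mono (Icc_subset_Icc hup le_rfl)).preimage_isClosed_of_isClosed
      isClosed_Icc isClosed_singleton
  have hTbdd : BddBelow T := ⟨p, fun x hx => hx.1.1⟩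
  set q := sInf T with hq
  have hqT : q ∈ T := hTclosed.csInf_mem hTne hTbdd
  have hpq : p ≤ q := hqT.1.1
  have hqv : q ≤ v := hqT.1.2
  have hfq : f q = f v := hqT.2
  refine ⟨p, q, hup, hpq, hqv, ?_⟩
  have hsub : Icc p q ⊆ Icc u v := Icc_subset_Icc hup hqv
  apply Subset.antisymm
  · rintro y ⟨x, hx, rfl⟩
    have hxI : x ∈ Icc u v := hsub hx
    -- helper: landing in S forces x = p; landing in T forces x = q
    have hSx : ∀ y', y' ∈ Icc u v → f y' = f u → x ≤ y' → f x = f u := by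
      intro y' hy' hfy' hxy'
      have h1 : y' ≤ p := le_csSup hSbdd ⟨hy', hfy'⟩
      have : x = p := le_antisymm (le_trans hxy' h1) hx.1
      rw [this, hfp]
    have hTx : ∀ y', y' ∈ Icc p v → f y' = f v → y' ≤ x → f x = f v := by
      intro y' hy' hfy' hxy'
      have h1 : q ≤ y' := csInf_le hTbdd ⟨hy', hfy'⟩
      have : x = q := le_antisymm hx.2 (le_trans h1 hxy')
      rw [this, hfq]
    have contpx : ContinuousOn f (Icc p x) :=
      hf.mono (fun z hz => hsub ⟨hz.1, le_trans hz.2 hx.2⟩)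
    have contxq : ContinuousOn f (Icc x q) :=
      hf.mono (fun z hz => hsub ⟨le_trans hx.1 hz.1, hz.2⟩)
    rcases lt_or_ge (f x) (f u ⊓ f v) with hlow | h1
    · exfalso
      rcases le_total (f u) (f v) with hcd | hcd
      · -- f x < f u ≤ f v : find y ∈ [x,q] with f y = f u
        obtain ⟨y', hy', hfy'⟩ :=
          intermediate_value_Icc hx.2 contxq
            ⟨le_of_lt (lt_of_lt_of_le hlow inf_le_left), by rw [hfq]; exact hcd⟩
        have := hSx y' ⟨le_trans hxI.1 hy'.1, le_trans hy'.2 hqv⟩ hfy' hy'.1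
        rw [this] at hlow; exact absurd inf_le_left (not_le_of_gt hlow)
      · -- f x < f v ≤ f u : find y ∈ [p,x] with f y = f v
        obtain ⟨y', hy', hfy'⟩ :=
          intermediate_value_Icc' hx.1 contpx
            ⟨le_of_lt (lt_of_lt_of_le hlow inf_le_right), by rw [hfp]; exact hcd⟩
        have := hTx y' ⟨hy'.1, le_trans hy'.2 (le_trans hx.2 hqv)⟩ hfy' hy'.2
        rw [this] at hlow; exact absurd inf_le_right (not_le_of_gt hlow)
    rcases lt_or_ge (f u ⊔ f v) (f x) with hhigh | h2
    · exfalso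
      rcases le_total (f u) (f v) with hcd | hcd
      · -- f u ≤ f v < f x : find y ∈ [p,x] with f y = f v
        obtain ⟨y', hy', hfy'⟩ :=
          intermediate_value_Icc hx.1 contpx
            ⟨by rw [hfp]; exact hcd, le_of_lt (lt_of_le_of_lt le_sup_right hhigh)⟩
        have := hTx y' ⟨hy'.1, le_trans hy'.2 (le_trans hx.2 hqv)⟩ hfy' hy'.2
        rw [this] at hhigh; exact absurd le_sup_right (not_le_of_gt hhigh)
      · -- f v ≤ f u < f x : find y ∈ [x,q] with f y = f u
        obtain ⟨y', hy', hfy'⟩ :=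
          intermediate_value_Icc' hx.2 contxq
            ⟨by rw [hfq]; exact hcd, le_of_lt (lt_of_le_of_lt le_sup_left hhigh)⟩
        have := hSx y' ⟨le_trans hxI.1 hy'.1, le_trans hy'.2 hqv⟩ hfy' hy'.1
        rw [this] at hhigh; exact absurd le_sup_left (not_le_of_gt hhigh)
    · rw [uIcc]; exact ⟨h1, h2⟩
  · have h := intermediate_value_uIcc (f := f) (a := p) (b := q)
      (by rw [uIcc_of_le hpq]; exact hf.mono hsub)
    rw [uIcc_of_le hpq, hfp, hfq] at h
    exact h

theorem shrinking_lemma_interval (g : ℝ → ℝ)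
    (hg : ContinuousOn g (Icc 0 1)) (hmap : MapsTo g (Icc 0 1) (Icc 0 1))
    (a b : ℕ → ℝ)
    (hab : ∀ i, a i ≤ b i)
    (hsub : ∀ i, Icc (a i) (b i) ⊆ Icc (0:ℝ) 1)
    (hcov : ∀ i, Icc (a (i+1)) (b (i+1)) ⊆ g '' Icc (a i) (b i)) :
    ∃ p q : ℕ → ℝ,
      (∀ i, p i ≤ q i) ∧
      Icc (p 0) (q 0) = Icc (a 0) (b 0) ∧
      (∀ i, Icc (p (i+1)) (q (i+1)) ⊆ Icc (p i) (q i)) ∧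
      (∀ i, g^[i] '' Icc (p i) (q i) = Icc (a i) (b i)) := by
  have contIter : ∀ n, ContinuousOn g^[n] (Icc 0 1) := fun n => hg.iterate hmap n
  set Inv : ℕ → ℝ × ℝ → Prop := fun i pq =>
    pq.1 ≤ pq.2 ∧ Icc pq.1 pq.2 ⊆ Icc (0:ℝ) 1 ∧
      g^[i] '' Icc pq.1 pq.2 = Icc (a i) (b i) with hInv
  have base : Inv 0 (a 0, b 0) := ⟨hab 0, hsub 0, by simp⟩
  have step : ∀ i pq, Inv i pq → ∃ pq' : ℝ × ℝ,
      Inv (i+1) pq' ∧ Icc pq'.1 pq'.2 ⊆ Icc pq.1 pq.2 := by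
    rintro i ⟨pp, qq⟩ ⟨h1, h2, h3⟩
    have hcov' : Icc (a (i+1)) (b (i+1)) ⊆ g^[i+1] '' Icc pp qq := by
      rw [Function.iterate_succ', image_comp, h3]
      exact hcov i
    obtain ⟨u, hu, hfu⟩ := hcov' ⟨le_refl _, hab (i+1)⟩
    obtain ⟨v, hv, hfv⟩ := hcov' ⟨hab (i+1), le_refl _⟩
    have hcont : ∀ s t : ℝ, Icc s t ⊆ Icc pp qq → ContinuousOn g^[i+1] (Icc s t) :=
      fun s t hst => (contIter (i+1)).mono (fun z hz => h2 (hst hz))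
    rcases le_total u v with huv | hvu
    · obtain ⟨p', q', h4, h5, h6, h7⟩ := exists_Icc_image_eq_uIcc g^[i+1] huv
        (hcont u v (Icc_subset_Icc hu.1 hv.2))
      refine ⟨(p', q'), ⟨h5, fun z hz => h2 ⟨le_trans hu.1 (le_trans h4 hz.1),
        le_trans hz.2 (le_trans h6 hv.2)⟩, ?_⟩,
        Icc_subset_Icc (le_trans hu.1 h4) (le_trans h6 hv.2)⟩
      rw [h7, hfu, hfv, uIcc_of_le (hab (i+1))]
    · obtain ⟨p', q', h4, h5, h6, h7⟩ := exists_Icc_image_eq_uIcc g^[i+1] hvu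
        (hcont v u (Icc_subset_Icc hv.1 hu.2))
      refine ⟨(p', q'), ⟨h5, fun z hz => h2 ⟨le_trans hv.1 (le_trans h4 hz.1),
        le_trans hz.2 (le_trans h6 hu.2)⟩, ?_⟩,
        Icc_subset_Icc (le_trans hv.1 h4) (le_trans h6 hu.2)⟩
      rw [h7, hfu, hfv, uIcc_of_ge (hab (i+1))]
  choose next hnext hnest using step
  let F : (i : ℕ) → {pq : ℝ × ℝ // Inv i pq} := fun i =>
    Nat.rec ⟨(a 0, b 0), base⟩ (fun n ih => ⟨next n ih.1 ih.2, hnext n ih.1 ih.2⟩) i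
  refine ⟨fun i => (F i).1.1, fun i => (F i).1.2, fun i => (F i).2.1, rfl,
    fun i => hnest i (F i).1 (F i).2, fun i => (F i).2.2.2⟩
end

section
/- Let f : [0,1] → [0,1] be continuous with a point a such that f(a) = b, f(b) = c, f(c) = a and c < a < b (a 3-cycle with c ≤ f(b) pattern as in Li–Yorke). Then for every positive integer p there exists a point of least period p. -/
open Set

private lemma exact_sub {g : ℝ → ℝ} {α β s t : ℝ} (hαβ : α ≤ β)
    (hg : ContinuousOn g (Icc α β)) (hgα : g α = s) (hgβ : g β = t) (hst : s ≤ t) :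
    ∃ u v, α ≤ u ∧ u ≤ v ∧ v ≤ β ∧ g '' Icc u v = Icc s t := by
  set S : Set ℝ := {x | x ∈ Icc α β ∧ g x = t} with hS
  have hSclosed : IsClosed S := by
    have h1 := hg.preimage_isClosed_of_isClosed isClosed_Icc (isClosed_singleton (x := t))
    have h2 : S = Icc α β ∩ g ⁻¹' {t} := by ext x; simp [hS]
    rw [h2]; exact h1
  have hSne : S.Nonempty := ⟨β, ⟨right_mem_Icc.2 hαβ, hgβ⟩⟩
  have hSbdd : BddBelow S := ⟨α, fun x hx => hx.1.1⟩
  set v := sInf S with hv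
  have hvS : v ∈ S := hSclosed.csInf_mem hSne hSbdd
  have hαv : α ≤ v := hvS.1.1
  have hvβ : v ≤ β := hvS.1.2
  have hgv : g v = t := hvS.2
  have hmin : ∀ x, x ∈ Icc α β → g x = t → v ≤ x := fun x hx hgx => csInf_le hSbdd ⟨hx, hgx⟩
  set S2 : Set ℝ := {x | x ∈ Icc α v ∧ g x = s} with hS2
  have hsubIcc : Icc α v ⊆ Icc α β := Icc_subset_Icc le_rfl hvβ
  have hS2closed : IsClosed S2 := by
    have h1 := (hg.mono hsubIcc).preimage_isClosed_of_isClosed isClosed_Icc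
      (isClosed_singleton (x := s))
    have h2 : S2 = Icc α v ∩ g ⁻¹' {s} := by ext x; simp [hS2]
    rw [h2]; exact h1
  have hS2ne : S2.Nonempty := ⟨α, ⟨left_mem_Icc.2 hαv, hgα⟩⟩
  have hS2bdd : BddAbove S2 := ⟨v, fun x hx => hx.1.2⟩
  set u := sSup S2 with hu
  have huS : u ∈ S2 := hS2closed.csSup_mem hS2ne hS2bdd
  have hαu : α ≤ u := huS.1.1
  have huv : u ≤ v := huS.1.2
  have hgu : g u = s := huS.2
  have hmax : ∀ x, x ∈ Icc α v → g x = s → x ≤ u := fun x hx hgx => le_csSup hS2bdd ⟨hx, hgx⟩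
  have hsub2 : Icc u v ⊆ Icc α β := Icc_subset_Icc hαu hvβ
  refine ⟨u, v, hαu, huv, hvβ, Set.Subset.antisymm ?_ ?_⟩
  · rintro _ ⟨w, hw, rfl⟩
    constructor
    · by_contra h
      push_neg at h
      have hIcc : Icc w v ⊆ Icc α β := Icc_subset_Icc (hαu.trans hw.1) hvβ
      have : s ∈ Icc (g w) (g v) := ⟨h.le, hgv ▸ hst⟩
      obtain ⟨z, hz, hgz⟩ := intermediate_value_Icc hw.2 (hg.mono hIcc) this
      have hzu : z ≤ u := hmax z ⟨hαu.trans (hw.1.trans hz.1), hz.2⟩ hgz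
      have : z = u := le_antisymm hzu (hw.1.trans hz.1)
      have hwu : w = u := le_antisymm (this ▸ hz.1) hw.1
      rw [hwu, hgu] at h; exact lt_irrefl s h
    · by_contra h
      push_neg at h
      have hIcc : Icc u w ⊆ Icc α β := Icc_subset_Icc hαu (hw.2.trans hvβ)
      have : t ∈ Icc (g u) (g w) := ⟨hgu ▸ hst, h.le⟩
      obtain ⟨z, hz, hgz⟩ := intermediate_value_Icc hw.1 (hg.mono hIcc) this
      have hvz : v ≤ z := hmin z ⟨hαu.trans hz.1, (hz.2.trans hw.2).trans hvβ⟩ hgz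
      have : z = v := le_antisymm (hz.2.trans hw.2) hvz
      have hwv : w = v := le_antisymm hw.2 (this ▸ hz.2)
      rw [hwv, hgv] at h; exact lt_irrefl t h
  · have := intermediate_value_Icc huv (hg.mono hsub2)
    rw [hgu, hgv] at this
    exact this

private lemma exact_cover_s11 {g : ℝ → ℝ} {u v s t : ℝ} (huv : u ≤ v) (hst : s ≤ t)
    (hg : ContinuousOn g (Icc u v)) (hsub : Icc s t ⊆ g '' Icc u v) :
    ∃ u' v', u ≤ u' ∧ u' ≤ v' ∧ v' ≤ v ∧ g '' Icc u' v' = Icc s t := by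
  obtain ⟨α, hα, hgα⟩ := hsub (left_mem_Icc.2 hst)
  obtain ⟨β, hβ, hgβ⟩ := hsub (right_mem_Icc.2 hst)
  rcases le_total α β with hαβ | hβα
  · have hIcc : Icc α β ⊆ Icc u v := Icc_subset_Icc hα.1 hβ.2
    obtain ⟨u', v', h1, h2, h3, h4⟩ := exact_sub hαβ (hg.mono hIcc) hgα hgβ hst
    exact ⟨u', v', hα.1.trans h1, h2, h3.trans hβ.2, h4⟩
  · have hIcc : Icc β α ⊆ Icc u v := Icc_subset_Icc hβ.1 hα.2
    set h : ℝ → ℝ := fun x => s + t - g x with hh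
    have hhc : ContinuousOn h (Icc β α) := continuousOn_const.sub (hg.mono hIcc)
    have hhβ : h β = s := by simp [hh, hgβ]
    have hhα : h α = t := by simp [hh, hgα]
    obtain ⟨u', v', h1, h2, h3, h4⟩ := exact_sub hβα hhc hhβ hhα hst
    refine ⟨u', v', hβ.1.trans h1, h2, h3.trans hα.2, ?_⟩
    have key : g '' Icc u' v' = (fun y => s + t - y) '' (h '' Icc u' v') := by
      rw [← Set.image_comp]
      apply Set.image_congr
      intro x _
      simp [hh]
    rw [key, h4, Set.image_const_sub_Icc]
    congr 1 <;> ring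

theorem period_three_implies_all_periods (f : ℝ → ℝ)
    (hf : ContinuousOn f (Icc 0 1)) (hmap : MapsTo f (Icc 0 1) (Icc 0 1))
    (a b c : ℝ) (ha : a ∈ Icc (0:ℝ) 1) (hb : b ∈ Icc (0:ℝ) 1)
    (hc : c ∈ Icc (0:ℝ) 1)
    (hfa : f a = b) (hfb : f b = c) (hfc : f c = a)
    (hca : c < a) (hab : a < b) :
    ∀ p : ℕ, 0 < p →
      ∃ x ∈ Icc (0:ℝ) 1, f^[p] x = x ∧ ∀ k, 0 < k → k < p → f^[k] x ≠ x := by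
  intro p hp
  have hJ01 : Icc a b ⊆ Icc (0:ℝ) 1 := Icc_subset_Icc ha.1 hb.2
  have hI01 : Icc c a ⊆ Icc (0:ℝ) 1 := Icc_subset_Icc hc.1 ha.2
  have hcb : c < b := hca.trans hab
  -- continuity of iterates
  have hiter : ∀ k, ContinuousOn (f^[k]) (Icc 0 1) := by
    intro k
    induction k with
    | zero => simpa using continuousOn_id
    | succ n ih =>
      rw [Function.iterate_succ']
      exact hf.comp ih (hmap.iterate n)
  -- covering facts
  have h1 : Icc a b ⊆ f '' Icc a b := by
    have := intermediate_value_Icc' hab.le (hf.mono hJ01)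
    rw [hfa, hfb] at this
    exact (Icc_subset_Icc hca.le le_rfl).trans this
  have h2 : Icc c a ⊆ f '' Icc a b := by
    have := intermediate_value_Icc' hab.le (hf.mono hJ01)
    rw [hfa, hfb] at this
    exact (Icc_subset_Icc le_rfl hab.le).trans this
  have h3 : Icc a b ⊆ f '' Icc c a := by
    have := intermediate_value_Icc hca.le (hf.mono hI01)
    rw [hfa, hfc] at this
    exact this
  -- case p = 1 : fixed point in [a,b]
  rcases eq_or_lt_of_le (Nat.one_le_iff_ne_zero.2 hp.ne') with hp1 | hp2
  · obtain ⟨x, hx, hfx⟩ := h1 (left_mem_Icc.2 hab.le)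
    -- need fixed point: use IVT on g x = f x - x
    have hg : ContinuousOn (fun x => f x - x) (Icc a b) := (hf.mono hJ01).sub continuousOn_id
    have hmem : (0:ℝ) ∈ Icc (f b - b) (f a - a) := by
      rw [hfa, hfb]
      constructor <;> [linarith; linarith]
    obtain ⟨x, hx, hfx⟩ := intermediate_value_Icc' hab.le hg hmem
    simp only at hfx
    refine ⟨x, hJ01 hx, ?_, ?_⟩
    · have hfix : f x = x := by linarith
      rw [← hp1]; simpa using hfix
    · intro k hk hkp _; omega
  · -- p ≥ 2
    set lo : ℕ → ℝ := fun k => if k = p - 1 then c else a with hlo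
    set hi : ℕ → ℝ := fun k => if k = p - 1 then a else b with hhi
    have hlohi : ∀ k, lo k ≤ hi k := by
      intro k; simp only [hlo, hhi]
      split <;> [exact hca.le; exact hab.le]
    have hT01 : ∀ k, Icc (lo k) (hi k) ⊆ Icc (0:ℝ) 1 := by
      intro k; simp only [hlo, hhi]
      split <;> [exact hI01; exact hJ01]
    have hTJ : ∀ k, Icc (lo k) (hi k) ⊆ Icc c b := by
      intro k; simp only [hlo, hhi]
      split
      · exact Icc_subset_Icc le_rfl hab.le
      · exact Icc_subset_Icc hca.le le_rfl
    have hcover : ∀ n, Icc (lo (n+1)) (hi (n+1)) ⊆ f '' Icc (lo n) (hi n) := by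
      intro n
      by_cases hn : n = p - 1
      · have hn1 : ¬ (n + 1 = p - 1) := by omega
        simp only [hlo, hhi, if_pos hn, if_neg hn1]
        exact h3
      · simp only [hlo, hhi, if_neg hn]
        by_cases hn1 : n + 1 = p - 1
        · simp only [if_pos hn1]; exact h2
        · simp only [if_neg hn1]; exact h1
    have hT0 : lo 0 = a ∧ hi 0 = b := by
      have : ¬ (0 = p - 1) := by omega
      simp [hlo, hhi, this]
    -- chain construction
    have chain : ∀ n, n ≤ p → ∃ u v, u ≤ v ∧ Icc u v ⊆ Icc a b ∧
        (∀ k, k ≤ n → f^[k] '' Icc u v ⊆ Icc (lo k) (hi k)) ∧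
        f^[n] '' Icc u v = Icc (lo n) (hi n) := by
      intro n
      induction n with
      | zero =>
        intro _
        refine ⟨a, b, hab.le, le_rfl, ?_, ?_⟩
        · intro k hk
          interval_cases k
          rw [hT0.1, hT0.2]; simp
        · rw [hT0.1, hT0.2]; simp
      | succ n ih =>
        intro hnp
        obtain ⟨u, v, huv, hQJ, hall, hexact⟩ := ih (by omega)
        -- step 1 : exact subinterval of T n mapping onto T (n+1) under f
        obtain ⟨σ, τ, hσ, hστ, hτ, hexact1⟩ := exact_cover_s11 (hlohi n) (hlohi (n+1))
          (hf.mono (hT01 n)) (hcover n)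
        -- step 2 : exact subinterval of [u,v] mapping onto [σ,τ] under f^[n]
        have hsub : Icc σ τ ⊆ f^[n] '' Icc u v := by
          rw [hexact]; exact Icc_subset_Icc hσ hτ
        obtain ⟨u', v', hu', hu'v', hv', hexact2⟩ := exact_cover_s11 huv hστ
          ((hiter n).mono (hQJ.trans hJ01)) hsub
        have hQ'Q : Icc u' v' ⊆ Icc u v := Icc_subset_Icc hu' hv'
        refine ⟨u', v', hu'v', hQ'Q.trans hQJ, ?_, ?_⟩
        · intro k hk
          rcases Nat.lt_succ_iff_lt_or_eq.mp (Nat.lt_succ_of_le hk) with h | h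
          · exact (Set.image_mono hQ'Q).trans (hall k (by omega))
          · subst h
            rw [Function.iterate_succ', Set.image_comp, hexact2, hexact1]
        · rw [Function.iterate_succ', Set.image_comp, hexact2, hexact1]
    obtain ⟨u, v, huv, hQJ, hall, hexact⟩ := chain p le_rfl
    -- T p = [a, b]
    have hTp : lo p = a ∧ hi p = b := by
      have : ¬ (p = p - 1) := by omega
      simp [hlo, hhi, this]
    rw [hTp.1, hTp.2] at hexact
    -- find fixed point of f^[p] in [u, v]
    obtain ⟨x₁, hx₁, hgx₁⟩ : ∃ x₁ ∈ Icc u v, f^[p] x₁ = a := by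
      obtain ⟨x₁, hx₁, hgx₁⟩ := hexact ▸ (left_mem_Icc.2 hab.le : a ∈ Icc a b)
      exact ⟨x₁, hx₁, hgx₁⟩
    obtain ⟨x₂, hx₂, hgx₂⟩ : ∃ x₂ ∈ Icc u v, f^[p] x₂ = b := by
      obtain ⟨x₂, hx₂, hgx₂⟩ := hexact ▸ (right_mem_Icc.2 hab.le : b ∈ Icc a b)
      exact ⟨x₂, hx₂, hgx₂⟩
    have hgc : ContinuousOn (fun y => f^[p] y - y) (uIcc x₁ x₂) := by
      apply ContinuousOn.sub _ continuousOn_id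
      apply (hiter p).mono
      intro y hy
      apply hJ01 (hQJ _)
      rcases le_total x₁ x₂ with h | h
      · rw [uIcc_of_le h] at hy
        exact Icc_subset_Icc hx₁.1 hx₂.2 hy
      · rw [uIcc_of_ge h] at hy
        exact Icc_subset_Icc hx₂.1 hx₁.2 hy
    have hmem0 : (0:ℝ) ∈ uIcc (f^[p] x₁ - x₁) (f^[p] x₂ - x₂) := by
      rw [hgx₁, hgx₂]
      have l1 : a - x₁ ≤ 0 := by have := (hQJ hx₁).1; linarith
      have l2 : 0 ≤ b - x₂ := by have := (hQJ hx₂).2; linarith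
      rcases le_total (a - x₁) (b - x₂) with h | h
      · rw [uIcc_of_le h]; exact ⟨l1, l2⟩
      · rw [uIcc_of_ge h]; exact ⟨by linarith, by linarith⟩
    obtain ⟨x, hxmem, hxfix⟩ := intermediate_value_uIcc hgc hmem0
    have hxQ : x ∈ Icc u v := by
      rcases le_total x₁ x₂ with h | h
      · rw [uIcc_of_le h] at hxmem
        exact Icc_subset_Icc hx₁.1 hx₂.2 hxmem
      · rw [uIcc_of_ge h] at hxmem
        exact Icc_subset_Icc hx₂.1 hx₁.2 hxmem
    simp only at hxfix
    have hfix : f^[p] x = x := by linarith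
    have hit : ∀ k, k ≤ p → f^[k] x ∈ Icc (lo k) (hi k) := by
      intro k hk
      exact hall k hk ⟨x, hxQ, rfl⟩
    refine ⟨x, hJ01 (hQJ hxQ), hfix, ?_⟩
    -- least period
    intro k hk hkp hkfix
    have hper : Function.IsPeriodicPt f k x := hkfix
    -- f^[p-1] x ∈ T (p-1) = [c, a]
    have hp1mem : f^[p-1] x ∈ Icc c a := by
      have := hit (p-1) (by omega)
      simpa [hlo, hhi] using this
    -- also f^[p-1] x = f^[(p-1) % k] x ∈ [a, b]
    have hrlt : (p-1) % k ≠ p - 1 := by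
      have := Nat.mod_lt (p-1) hk
      have hkle : (p-1) % k < k := Nat.mod_lt _ hk
      omega
    have hrmem : f^[p-1] x ∈ Icc a b := by
      have heq := hper.iterate_mod_apply (p-1)
      rw [← heq]
      have := hit ((p-1) % k) (by have := Nat.mod_le (p-1) k; omega)
      simpa [hlo, hhi, hrlt] using this
    have hpa : f^[p-1] x = a := le_antisymm hp1mem.2 hrmem.1
    have hxb : x = b := by
      have : f^[p] x = f (f^[p-1] x) := by
        rw [← Function.iterate_succ_apply' f (p-1) x]
        congr 1; omega
      rw [hfix, hpa, hfa] at this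
      exact this
    -- now x = b, so b is p-periodic; minimal period of b is 3
    have h3b : Function.IsPeriodicPt f 3 b := by
      show f^[3] b = b
      simp [Function.iterate_succ_apply, hfb, hfc, hfa]
    have hnotfix : ¬ Function.IsFixedPt f b := by
      intro h
      rw [Function.IsFixedPt, hfb] at h
      linarith
    have hmin3 : Function.minimalPeriod f b = 3 := by
      have hdvd := h3b.minimalPeriod_dvd
      rcases (Nat.prime_three.eq_one_or_self_of_dvd _ hdvd) with h | h
      · exact absurd (Function.minimalPeriod_eq_one_iff_isFixedPt.1 h) hnotfix
      · exact h
    have hpp : Function.IsPeriodicPt f p b := hxb ▸ hfix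
    have h3p : 3 ∣ p := hmin3 ▸ hpp.minimalPeriod_dvd
    -- p ≥ 3, so 1 ≤ p and 1 ≠ p-1; f^[1] x = c ∈ [a,b], contradiction
    have hp3 : 3 ≤ p := Nat.le_of_dvd hp h3p
    have h1ne : (1:ℕ) ≠ p - 1 := by omega
    have : f^[1] x ∈ Icc a b := by
      have := hit 1 (by omega)
      simpa [hlo, hhi, h1ne] using this
    rw [Function.iterate_one, hxb, hfb] at this
    linarith [this.1]
end

section
/- Let f : [0,1] → [0,1] be continuous with points satisfying f(v) < u < v ≤ f(u) for some u < v, together with a finite f-loop B₀ = [u,v], B₁, …, B_p with B₁ ⊆ [f(v), u], B_{p−1} ∩ (u, v) = ∅, and B_{i+1} ⊆ f(Bᵢ) for all i < p, B_p ⊇ B₀. Then f is Li–Yorke chaotic: there exists an uncountable set S ⊆ [0,1] such that for all distinct p, q ∈ S, liminf |fⁱ(p) − fⁱ(q)| = 0 and limsup |fⁱ(p) − fⁱ(q)| > 0. -/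
open Set Filter

/-- Core covering lemma: oriented version. -/
lemma coverA {F : ℝ → ℝ} {s t c d : ℝ} (hst : s ≤ t) (hF : ContinuousOn F (Icc s t))
    (hs : F s = c) (ht : F t = d) (hcd : c ≤ d) :
    ∃ a b, s ≤ a ∧ a ≤ b ∧ b ≤ t ∧ F '' Icc a b = Icc c d := by
  set T : Set ℝ := Icc s t ∩ F ⁻¹' {d} with hT
  have hTcl : IsClosed T := hF.preimage_isClosed_of_isClosed isClosed_Icc isClosed_singleton
  have hTne : T.Nonempty := ⟨t, ⟨hst, le_rfl⟩, by simpa using ht⟩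
  have hTbdd : BddBelow T := ⟨s, fun x hx => hx.1.1⟩
  set b := sInf T with hb
  have hbT : b ∈ T := hTcl.csInf_mem hTne hTbdd
  have hbs : s ≤ b := hbT.1.1
  have hbt : b ≤ t := hbT.1.2
  have hFb : F b = d := hbT.2
  set T' : Set ℝ := Icc s b ∩ F ⁻¹' {c} with hT'
  have hsb : Icc s b ⊆ Icc s t := Icc_subset_Icc le_rfl hbt
  have hT'cl : IsClosed T' := (hF.mono hsb).preimage_isClosed_of_isClosed isClosed_Icc isClosed_singleton
  have hT'ne : T'.Nonempty := ⟨s, ⟨le_rfl, hbs⟩, by simpa using hs⟩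
  have hT'bdd : BddAbove T' := ⟨b, fun x hx => hx.1.2⟩
  set a := sSup T' with ha
  have haT' : a ∈ T' := hT'cl.csSup_mem hT'ne hT'bdd
  have has : s ≤ a := haT'.1.1
  have hab : a ≤ b := haT'.1.2
  have hFa : F a = c := haT'.2
  refine ⟨a, b, has, hab, hbt, ?_⟩
  have habsub : Icc a b ⊆ Icc s t := Icc_subset_Icc has hbt
  apply Set.Subset.antisymm
  · rintro _ ⟨x, hx, rfl⟩
    constructor
    · by_contra h
      push_neg at h
      -- F x < c : find y ∈ [x,b] with F y = c, contradicting a = sSup T'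
      have hxb : x ≤ b := hx.2
      have hivt := intermediate_value_Icc hxb (hF.mono (Icc_subset_Icc (has.trans hx.1) hbt))
      have : c ∈ Icc (F x) (F b) := ⟨h.le, by rw [hFb]; exact hcd⟩
      obtain ⟨y, hy, hFy⟩ := hivt this
      have hya : y ≤ a := le_csSup hT'bdd ⟨⟨has.trans (hx.1.trans hy.1), hy.2⟩, hFy⟩
      have hay : a < y := lt_of_lt_of_le (lt_of_le_of_ne hx.1 (fun he => by rw [← he, hFa] at h; exact absurd h (lt_irrefl c))) hy.1
      exact absurd hya (not_le.mpr hay)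
    · by_contra h
      push_neg at h
      -- F x > d : find y ∈ [a,x] with F y = d with y < b, contradicting b = sInf T
      have hivt := intermediate_value_Icc hx.1 (hF.mono (Icc_subset_Icc has (hx.2.trans hbt)))
      have : d ∈ Icc (F a) (F x) := ⟨by rw [hFa]; exact hcd, h.le⟩
      obtain ⟨y, hy, hFy⟩ := hivt this
      have hby : b ≤ y := csInf_le hTbdd ⟨⟨has.trans hy.1, (hy.2.trans hx.2).trans hbt⟩, hFy⟩
      have hyb : y < b := lt_of_le_of_lt hy.2 (lt_of_le_of_ne hx.2 (fun he => by rw [he, hFb] at h; exact absurd h (lt_irrefl d)))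
      exact absurd hby (not_le.mpr hyb)
  · have := intermediate_value_Icc hab (hF.mono habsub)
    rw [hFa, hFb] at this
    exact this

/-- Covering lemma: if `[c,d] ⊆ F([A,B])` then some subinterval maps onto `[c,d]`. -/
lemma coverB {F : ℝ → ℝ} {A B c d : ℝ} (hAB : A ≤ B) (hF : ContinuousOn F (Icc A B))
    (hcd : c ≤ d) (hsub : Icc c d ⊆ F '' Icc A B) :
    ∃ a b, a ≤ b ∧ Icc a b ⊆ Icc A B ∧ F '' Icc a b = Icc c d := by
  obtain ⟨α, hα, hFα⟩ := hsub (left_mem_Icc.mpr hcd)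
  obtain ⟨β, hβ, hFβ⟩ := hsub (right_mem_Icc.mpr hcd)
  rcases le_total α β with h | h
  · obtain ⟨a, b, h1, h2, h3, h4⟩ := coverA h (hF.mono (Icc_subset_Icc hα.1 hβ.2)) hFα hFβ hcd
    exact ⟨a, b, h2, (Icc_subset_Icc (hα.1.trans h1) (h3.trans hβ.2)), h4⟩
  · -- reflected case
    set G : ℝ → ℝ := fun x => F (β + α - x) with hG
    have hrefl : ContinuousOn (fun x : ℝ => β + α - x) (Icc β α) := (continuous_const.sub continuous_id).continuousOn
    have hmap : MapsTo (fun x : ℝ => β + α - x) (Icc β α) (Icc β α) := by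
      intro x hx; constructor <;> simp at hx ⊢ <;> linarith [hx.1, hx.2]
    have hGc : ContinuousOn G (Icc β α) := (hF.mono (Icc_subset_Icc hβ.1 hα.2)).comp hrefl
      (fun x hx => hmap hx)
    have hGβ : G β = c := by simp only [hG]; rw [show β + α - β = α by ring, hFα]
    have hGα : G α = d := by simp only [hG]; rw [show β + α - α = β by ring, hFβ]
    obtain ⟨a, b, h1, h2, h3, h4⟩ := coverA h hGc hGβ hGα hcd
    refine ⟨β + α - b, β + α - a, by linarith, Icc_subset_Icc (by linarith [hβ.1]) (by linarith [hα.2]), ?_⟩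
    have him : Icc (β + α - b) (β + α - a) = (fun x => β + α - x) '' Icc a b :=
      (image_const_sub_Icc (β + α) a b).symm
    rw [him, ← Set.image_comp] at *
    exact h4

lemma contIter {F : ℝ → ℝ} (hF : ContinuousOn F (Icc 0 1)) (hm : MapsTo F (Icc 0 1) (Icc 0 1)) :
    ∀ k : ℕ, ContinuousOn (F^[k]) (Icc (0:ℝ) 1) := by
  intro k
  induction k with
  | zero => simpa using continuousOn_id
  | succ n ih =>
    rw [Function.iterate_succ']
    exact hF.comp ih (hm.iterate n)

/-- Image of a nonempty interval in [0,1] under an iterate is a nonempty interval in [0,1]. -/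
lemma imInt {F : ℝ → ℝ} (hF : ContinuousOn F (Icc 0 1)) (hm : MapsTo F (Icc 0 1) (Icc 0 1))
    {a b : ℝ} (hab : a ≤ b) (hsub : Icc a b ⊆ Icc 0 1) (j : ℕ) :
    (∃ c d : ℝ, c ≤ d ∧ F^[j] '' Icc a b = Icc c d) ∧ F^[j] '' Icc a b ⊆ Icc 0 1 := by
  have hc : ContinuousOn (F^[j]) (Icc a b) := (contIter hF hm j).mono hsub
  have hcompact : IsCompact (F^[j] '' Icc a b) := (isCompact_Icc).image_of_continuousOn hc
  have hconn : IsConnected (F^[j] '' Icc a b) := by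
    refine ⟨(nonempty_Icc.mpr hab).image _, ?_⟩
    exact (isPreconnected_Icc).image _ hc
  have heq := eq_Icc_of_connected_compact hconn hcompact
  have hsub2 : F^[j] '' Icc a b ⊆ Icc 0 1 := by
    rintro _ ⟨x, hx, rfl⟩; exact (hm.iterate j) (hsub hx)
  refine ⟨⟨_, _, ?_, heq⟩, hsub2⟩
  obtain ⟨y, hy⟩ := hconn.1
  rw [heq] at hy; exact hy.1.trans hy.2

/-- Chain pullback lemma. -/
lemma chainPull {F : ℝ → ℝ} (hF : ContinuousOn F (Icc 0 1)) (hm : MapsTo F (Icc 0 1) (Icc 0 1))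
    (N : ℕ) (V : ℕ → Set ℝ)
    (hVI : ∀ i, i ≤ N → ∃ c d : ℝ, c ≤ d ∧ V i = Icc c d)
    (hVs : ∀ i, i ≤ N → V i ⊆ Icc 0 1)
    (hcv : ∀ i, i < N → V (i+1) ⊆ F '' V i) :
    ∃ a b, a ≤ b ∧ Icc a b ⊆ V 0 ∧ (∀ i, i ≤ N → F^[i] '' Icc a b ⊆ V i) ∧
      F^[N] '' Icc a b = V N := by
  induction N with
  | zero =>
    obtain ⟨c, d, hcd, hV0⟩ := hVI 0 le_rfl
    exact ⟨c, d, hcd, by rw [hV0], fun i hi => by interval_cases i; simp [hV0],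
      by simp [hV0]⟩
  | succ N ih =>
    obtain ⟨a, b, hab, hQ0, hQi, hQN⟩ := ih (fun i hi => hVI i (hi.trans (Nat.le_succ N)))
      (fun i hi => hVs i (hi.trans (Nat.le_succ N))) (fun i hi => hcv i (hi.trans (Nat.lt_succ_self N)))
    obtain ⟨c, d, hcd, hVN1⟩ := hVI (N+1) le_rfl
    have hsub01 : Icc a b ⊆ Icc 0 1 := hQ0.trans (hVs 0 (Nat.zero_le _))
    have hcont : ContinuousOn (F^[N+1]) (Icc a b) := (contIter hF hm (N+1)).mono hsub01
    have hcover : Icc c d ⊆ F^[N+1] '' Icc a b := by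
      rw [← hVN1]
      refine (hcv N (Nat.lt_succ_self N)).trans ?_
      rw [← hQN, Function.iterate_succ', Set.image_comp]
    obtain ⟨a', b', hab', hsub', heq'⟩ := coverB hab hcont hcd hcover
    refine ⟨a', b', hab', hsub'.trans hQ0, ?_, by rw [heq', hVN1]⟩
    intro i hi
    rcases Nat.lt_or_ge i (N+1) with h | h
    · exact (Set.image_mono hsub').trans (hQi i (Nat.lt_succ_iff.mp h))
    · have : i = N + 1 := le_antisymm hi h
      subst this; rw [heq', hVN1]
    
/-- Infinite itinerary lemma. -/
lemma itinerary {F : ℝ → ℝ} (hF : ContinuousOn F (Icc 0 1)) (hm : MapsTo F (Icc 0 1) (Icc 0 1))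
    (J : ℕ → Set ℝ)
    (hJI : ∀ m, ∃ c d : ℝ, c ≤ d ∧ J m = Icc c d)
    (hJs : ∀ m, J m ⊆ Icc 0 1)
    (hcv : ∀ m, J (m+1) ⊆ F '' J m) :
    ∃ x, ∀ m, F^[m] x ∈ J m := by
  set X : ℕ → Set ℝ := fun m => ⋂ i ∈ Finset.range (m+1), (Icc 0 1 ∩ F^[i] ⁻¹' J i) with hX
  have hXcl : ∀ m, IsClosed (X m) := by
    intro m
    refine isClosed_biInter (fun i _ => ?_)
    obtain ⟨c, d, _, hJ⟩ := hJI i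
    exact (contIter hF hm i).preimage_isClosed_of_isClosed isClosed_Icc (hJ ▸ isClosed_Icc)
  have hXmem : ∀ m x, x ∈ X m ↔ ∀ i ≤ m, x ∈ Icc (0:ℝ) 1 ∧ F^[i] x ∈ J i := by
    intro m x
    simp only [hX, Set.mem_iInter, Finset.mem_range, Nat.lt_succ_iff, Set.mem_inter_iff,
      Set.mem_preimage]
  have hXsub : ∀ m, X m ⊆ Icc 0 1 := fun m x hx => ((hXmem m x).mp hx 0 (Nat.zero_le m)).1
  have hXnested : ∀ m, X (m+1) ⊆ X m := by
    intro m x hx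
    rw [hXmem] at hx ⊢
    exact fun i hi => hx i (hi.trans (Nat.le_succ m))
  have hXne : ∀ m, (X m).Nonempty := by
    intro m
    obtain ⟨a, b, hab, hQ0, hQi, _⟩ := chainPull hF hm m J (fun i _ => hJI i)
      (fun i _ => hJs i) (fun i _ => hcv i)
    refine ⟨a, (hXmem m a).mpr (fun i hi => ?_)⟩
    have haQ : a ∈ Icc a b := left_mem_Icc.mpr hab
    exact ⟨(hJs 0) (hQ0 haQ), hQi i hi ⟨a, haQ, rfl⟩⟩
  have hXcomp : IsCompact (X 0) := IsCompact.of_isClosed_subset isCompact_Icc (hXcl 0) (hXsub 0)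
  obtain ⟨x, hx⟩ := IsCompact.nonempty_iInter_of_sequence_nonempty_isCompact_isClosed
    X hXnested hXne hXcomp hXcl
  refine ⟨x, fun m => ?_⟩
  have : x ∈ X m := Set.mem_iInter.mp hx m
  exact ((hXmem m x).mp this m le_rfl).2

theorem genscramble_interval (f : ℝ → ℝ)
    (hf : ContinuousOn f (Icc 0 1)) (hmap : MapsTo f (Icc 0 1) (Icc 0 1))
    (u v : ℝ) (hu : u ∈ Icc (0:ℝ) 1) (hv : v ∈ Icc (0:ℝ) 1)
    (huv : u < v) (hfv : f v < u) (hfu : v ≤ f u)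
    (p : ℕ) (hp : 1 ≤ p)
    (B : ℕ → Set ℝ)
    (hB : ∀ i ≤ p, ∃ c e : ℝ, c ≤ e ∧ B i = Icc c e)
    (hBsub : ∀ i ≤ p, B i ⊆ Icc (0:ℝ) 1)
    (hB0 : B 0 = Icc u v)
    (hB1 : B 1 ⊆ Icc (f v) u)
    (hBp1 : B (p-1) ∩ Ioo u v = ∅)
    (hcov : ∀ i < p, B (i+1) ⊆ f '' B i)
    (hloop : B 0 ⊆ B p) :
    ∃ S : Set ℝ, S ⊆ Icc 0 1 ∧ ¬ S.Countable ∧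
      ∀ x ∈ S, ∀ y ∈ S, x ≠ y →
        liminf (fun i => |f^[i] x - f^[i] y|) atTop = 0 ∧
        0 < limsup (fun i => |f^[i] x - f^[i] y|) atTop := by
  -- p ≥ 2
  have hp2 : 2 ≤ p := by
    rcases Nat.lt_or_ge p 2 with h | h
    · exfalso
      have hp1 : p = 1 := by omega
      rw [hp1] at hBp1
      simp only [Nat.sub_self, hB0] at hBp1
      have : (u+v)/2 ∈ Icc u v ∩ Ioo u v :=
        ⟨⟨by linarith, by linarith⟩, ⟨by linarith, by linarith⟩⟩
      rw [hBp1] at this; exact this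
    · exact h
  have hI01 : Icc u v ⊆ Icc (0:ℝ) 1 := Icc_subset_Icc hu.1 hv.2
  have hfuv : ContinuousOn f (Icc u v) := hf.mono hI01
  -- fixed point z
  obtain ⟨z, hzmem, hz⟩ : ∃ z ∈ Icc u v, f z = z := by
    have hcont : ContinuousOn (fun x => f x - x) (Icc u v) := hfuv.sub continuousOn_id
    have := intermediate_value_Icc' huv.le hcont
    have h0 : (0:ℝ) ∈ Icc (f v - v) (f u - u) := ⟨by linarith, by linarith⟩
    obtain ⟨z, hz1, hz2⟩ := this h0
    exact ⟨z, hz1, by linarith [sub_eq_zero.mp hz2]⟩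
  have huz : u < z := by
    rcases lt_or_eq_of_le hzmem.1 with h | h
    · exact h
    · exfalso; rw [← h] at hz; linarith
  have hzv : z < v := by
    rcases lt_or_eq_of_le hzmem.2 with h | h
    · exact h
    · exfalso; rw [h] at hz; linarith
  -- B0 covers itself
  have b0cov : Icc u v ⊆ f '' Icc u v := by
    have := intermediate_value_Icc' huv.le hfuv
    exact (Icc_subset_Icc hfv.le hfu).trans this
  have b0cov' : Icc (f v) (f u) ⊆ f '' Icc u v := intermediate_value_Icc' huv.le hfuv
  -- D' covers down to f v
  have d'cov : Icc (f v) z ⊆ f '' Icc z v := by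
    have := intermediate_value_Icc' hzv.le (hfuv.mono (Icc_subset_Icc huz.le le_rfl))
    rw [hz] at this; exact this
  -- chain for R
  obtain ⟨r₁, r₂, hr, hRsub, hRi, hRN⟩ : ∃ a b, a ≤ b ∧ Icc a b ⊆ Icc u v ∧
      (f '' Icc a b ⊆ B 1) ∧ f^[p+1] '' Icc a b = Icc u v := by
    set V : ℕ → Set ℝ := fun i => if i ≤ p - 1 then B i else Icc u v with hV
    have hVle : ∀ i, i ≤ p - 1 → V i = B i := fun i h => if_pos h
    have hVgt : ∀ i, ¬(i ≤ p - 1) → V i = Icc u v := fun i h => if_neg h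
    have hVB0 : V 0 = Icc u v := by rw [hVle 0 (Nat.zero_le _), hB0]
    obtain ⟨a, b, hab, h0, hi, hN⟩ := chainPull hf hmap (p+1) V
      (fun i hi => by
        by_cases h : i ≤ p - 1
        · rw [hVle i h]; exact hB i (by omega)
        · exact ⟨u, v, huv.le, hVgt i h⟩)
      (fun i hi => by
        by_cases h : i ≤ p - 1
        · rw [hVle i h]; exact hBsub i (by omega)
        · rw [hVgt i h]; exact hI01)
      (fun i hi => by
        by_cases h1 : i + 1 ≤ p - 1
        · have hip : i ≤ p - 1 := by omega
          rw [hVle _ h1, hVle _ hip]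
          rcases Nat.eq_zero_or_pos i with h0 | h0
          · subst h0
            rw [hB0]
            exact hB1.trans ((Icc_subset_Icc le_rfl (by linarith)).trans b0cov')
          · exact hcov i (by omega)
        · rw [hVgt _ h1]
          by_cases h2 : i ≤ p - 1
          · have hieq : i = p - 1 := by omega
            rw [hVle _ h2, hieq, ← hB0]
            refine hloop.trans ?_
            have := hcov (p-1) (by omega)
            rwa [show p - 1 + 1 = p by omega] at this
          · rw [hVgt _ h2]
            exact b0cov)
    refine ⟨a, b, hab, by rwa [hVB0] at h0, ?_, ?_⟩
    · have := hi 1 (by omega)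
      rw [Function.iterate_one, hVle 1 (by omega)] at this
      exact this
    · rw [hN, hVgt _ (by omega)]
  -- chain for S
  obtain ⟨s₁, s₂, hs, hSsub, hSi, hSN⟩ : ∃ a b, a ≤ b ∧ Icc a b ⊆ Icc u v ∧
      (f '' Icc a b ⊆ Icc z v) ∧ f^[p+1] '' Icc a b = Icc u v := by
    set V : ℕ → Set ℝ := fun i => if i = 1 then Icc z v else if i ≤ p then B (i-1) else Icc u v
      with hV
    have hV1 : V 1 = Icc z v := if_pos rfl
    have hVmid : ∀ i, i ≠ 1 → i ≤ p → V i = B (i-1) :=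
      fun i h h2 => (if_neg h).trans (if_pos h2)
    have hVbig : ∀ i, i ≠ 1 → ¬(i ≤ p) → V i = Icc u v :=
      fun i h h2 => (if_neg h).trans (if_neg h2)
    have hVB0 : V 0 = Icc u v := by
      rw [hVmid 0 (by omega) (by omega)]; exact hB0
    obtain ⟨a, b, hab, h0, hi, hN⟩ := chainPull hf hmap (p+1) V
      (fun i hi => by
        by_cases h : i = 1
        · subst h; exact ⟨z, v, hzv.le, hV1⟩
        · by_cases h2 : i ≤ p
          · rw [hVmid i h h2]; exact hB (i-1) (by omega)
          · exact ⟨u, v, huv.le, hVbig i h h2⟩)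
      (fun i hi => by
        by_cases h : i = 1
        · subst h; rw [hV1]
          exact (Icc_subset_Icc huz.le le_rfl).trans hI01
        · by_cases h2 : i ≤ p
          · rw [hVmid i h h2]; exact hBsub (i-1) (by omega)
          · rw [hVbig i h h2]; exact hI01)
      (fun i hi => by
        rcases Nat.eq_zero_or_pos i with h0 | h0
        · subst h0
          rw [hV1, hVB0]
          exact (Icc_subset_Icc huz.le le_rfl).trans b0cov
        · by_cases h1 : i = 1
          · subst h1
            rw [hVmid 2 (by omega) (by omega), hV1]
            show B 1 ⊆ f '' Icc z v
            exact hB1.trans ((Icc_subset_Icc le_rfl huz.le).trans d'cov)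
          · -- i ≥ 2
            rw [hVmid i h1 (by omega)]
            by_cases h2 : i + 1 ≤ p
            · rw [hVmid (i+1) (by omega) h2, show i + 1 - 1 = i by omega]
              have := hcov (i-1) (by omega)
              rwa [show i - 1 + 1 = i by omega] at this
            · rw [hVbig (i+1) (by omega) h2]
              have hieq : i = p := by omega
              rw [hieq, ← hB0]
              refine hloop.trans ?_
              have := hcov (p-1) (by omega)
              rwa [show p - 1 + 1 = p by omega] at this)
    refine ⟨a, b, hab, by rwa [hVB0] at h0, ?_, ?_⟩
    · have := hi 1 (by omega)
      rw [Function.iterate_one, hV1] at this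
      exact this
    · rw [hN, hVbig (p+1) (by omega) (by omega)]
  -- disjointness of R and S
  have hRS : ∀ x, x ∈ Icc r₁ r₂ → x ∈ Icc s₁ s₂ → False := by
    intro x hx1 hx2
    have h1 : f x ∈ B 1 := hRi ⟨x, hx1, rfl⟩
    have h2 : f x ∈ Icc z v := hSi ⟨x, hx2, rfl⟩
    have := (hB1 h1).2
    linarith [h2.1]
  -- separation constant
  obtain ⟨δ₁, hδ₁, hsep⟩ : ∃ δ, 0 < δ ∧ ∀ x ∈ Icc r₁ r₂, ∀ y ∈ Icc s₁ s₂, δ ≤ |x - y| := by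
    by_cases hc : r₂ < s₁
    · refine ⟨s₁ - r₂, by linarith, fun x hx y hy => ?_⟩
      have : s₁ - r₂ ≤ y - x := by linarith [hx.2, hy.1]
      calc s₁ - r₂ ≤ y - x := this
        _ ≤ |y - x| := le_abs_self _
        _ = |x - y| := abs_sub_comm y x
    · have hc2 : s₂ < r₁ := by
        by_contra hc2
        push_neg at hc hc2
        exact hRS (max r₁ s₁) ⟨le_max_left _ _, max_le hr hc⟩
          ⟨le_max_right _ _, max_le hc2 hs⟩
      refine ⟨r₁ - s₂, by linarith, fun x hx y hy => ?_⟩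
      have : r₁ - s₂ ≤ x - y := by linarith [hx.1, hy.2]
      exact this.trans (le_abs_self _)
  -- the iterate map g
  set g : ℝ → ℝ := f^[p+1] with hgdef
  have hg : ContinuousOn g (Icc 0 1) := contIter hf hmap (p+1)
  have hgm : MapsTo g (Icc 0 1) (Icc 0 1) := hmap.iterate (p+1)
  have gR : g '' Icc r₁ r₂ = Icc u v := hRN
  have gS : g '' Icc s₁ s₂ = Icc u v := hSN
  -- letters
  set LtA : Bool → ℝ := fun b => if b then s₁ else r₁ with hLtA
  set LtB : Bool → ℝ := fun b => if b then s₂ else r₂ with hLtB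
  have hLt : ∀ b : Bool, LtA b ≤ LtB b ∧ Icc (LtA b) (LtB b) ⊆ Icc u v ∧
      g '' Icc (LtA b) (LtB b) = Icc u v := by
    intro b; cases b
    · exact ⟨hr, hRsub, gR⟩
    · exact ⟨hs, hSsub, gS⟩
  have hLtdisj : ∀ b b' : Bool, b ≠ b' → ∀ x, x ∈ Icc (LtA b) (LtB b) →
      x ∈ Icc (LtA b') (LtB b') → False := by
    intro b b' hbb x h1 h2
    cases b <;> cases b' <;> simp at hbb <;>
      first
        | exact hRS x h1 h2
        | exact hRS x h2 h1
  -- small intervals with full returns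
  have hsmall : ∀ k : ℕ, ∃ c d : ℝ, c ≤ d ∧ d - c ≤ (v - u)/2^(k+1) ∧ Icc c d ⊆ Icc u v ∧
      g^[k+1] '' Icc c d = Icc u v := by
    intro k
    have hword : ∀ w : Fin (k+1) → Bool, ∃ a b : ℝ, a ≤ b ∧
        (∀ i : ℕ, ∀ hi : i < k+1, g^[i] '' Icc a b ⊆ Icc (LtA (w ⟨i, hi⟩)) (LtB (w ⟨i, hi⟩))) ∧
        Icc a b ⊆ Icc u v ∧ g^[k+1] '' Icc a b = Icc u v := by
      intro w
      set W : ℕ → Set ℝ := fun i => if h : i < k+1 then Icc (LtA (w ⟨i,h⟩)) (LtB (w ⟨i,h⟩))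
        else Icc u v with hW
      have hWlt : ∀ i, ∀ h : i < k+1, W i = Icc (LtA (w ⟨i,h⟩)) (LtB (w ⟨i,h⟩)) :=
        fun i h => dif_pos h
      have hWge : ∀ i, ¬(i < k+1) → W i = Icc u v := fun i h => dif_neg h
      have hWsub : ∀ i, W i ⊆ Icc u v := by
        intro i
        by_cases h : i < k + 1
        · rw [hWlt i h]; exact (hLt _).2.1
        · rw [hWge i h]
      obtain ⟨a, b, hab, h0, him, hN⟩ := chainPull hg hgm (k+1) W
        (fun i hi => by
          by_cases h : i < k+1
          · exact ⟨_, _, (hLt _).1, hWlt i h⟩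
          · exact ⟨u, v, huv.le, hWge i h⟩)
        (fun i hi => (hWsub i).trans hI01)
        (fun i hi => by
          refine (hWsub (i+1)).trans ?_
          rw [hWlt i hi, (hLt _).2.2])
      refine ⟨a, b, hab, fun i hi => by rw [← hWlt i hi]; exact him i hi.le, ?_, ?_⟩
      · exact h0.trans (hWsub 0)
      · rw [hN, hWge (k+1) (lt_irrefl _)]
    choose qa qb hq1 hq2 hq3 hq4 using hword
    have hdisj : ∀ w w' : Fin (k+1) → Bool, w ≠ w' →
        Disjoint (Icc (qa w) (qb w)) (Icc (qa w') (qb w')) := by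
      intro w w' hww
      obtain ⟨i, hip⟩ := Function.ne_iff.mp hww
      rw [Set.disjoint_left]
      intro x hx hx'
      have h1 : g^[i.1] x ∈ Icc (LtA (w ⟨i.1, i.2⟩)) (LtB (w ⟨i.1, i.2⟩)) :=
        hq2 w i.1 i.2 ⟨x, hx, rfl⟩
      have h2 : g^[i.1] x ∈ Icc (LtA (w' ⟨i.1, i.2⟩)) (LtB (w' ⟨i.1, i.2⟩)) :=
        hq2 w' i.1 i.2 ⟨x, hx', rfl⟩
      exact hLtdisj _ _ (by simpa using hip) _ h1 h2
    have hsum : ∑ w : (Fin (k+1) → Bool), (qb w - qa w) ≤ v - u := by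
      have pd : ((Finset.univ : Finset (Fin (k+1) → Bool)) : Set (Fin (k+1) → Bool)).PairwiseDisjoint
          (fun w => Icc (qa w) (qb w)) := fun w _ w' _ hne => hdisj w w' hne
      have hmeas := MeasureTheory.measure_biUnion_finset (μ := MeasureTheory.volume) pd
        (fun w _ => measurableSet_Icc)
      have hUsub : (⋃ w ∈ (Finset.univ : Finset (Fin (k+1) → Bool)), Icc (qa w) (qb w))
          ⊆ Icc u v := by
        intro x hx
        simp only [Set.mem_iUnion] at hx
        obtain ⟨w, _, hw⟩ := hx
        exact hq3 w hw
      have hle := (hmeas.symm.le.trans (MeasureTheory.measure_mono hUsub))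
      rw [Real.volume_Icc] at hle
      have heach : ∀ w : Fin (k+1) → Bool, MeasureTheory.volume (Icc (qa w) (qb w))
          = ENNReal.ofReal (qb w - qa w) := fun w => Real.volume_Icc
      simp only [heach] at hle
      rw [← ENNReal.ofReal_sum_of_nonneg (fun w _ => by linarith [hq1 w])] at hle
      exact (ENNReal.ofReal_le_ofReal_iff (by linarith)).mp hle
    have hpig : ∃ w : Fin (k+1) → Bool, qb w - qa w ≤ (v - u)/2^(k+1) := by
      by_contra hno
      push_neg at hno
      have hlt : ∑ _w : (Fin (k+1) → Bool), ((v-u)/2^(k+1)) <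
          ∑ w : (Fin (k+1) → Bool), (qb w - qa w) :=
        Finset.sum_lt_sum_of_nonempty Finset.univ_nonempty (fun w _ => hno w)
      rw [Finset.sum_const, nsmul_eq_mul] at hlt
      have hcard : ((Finset.univ : Finset (Fin (k+1) → Bool)).card : ℝ) = 2^(k+1) := by
        rw [Finset.card_univ, Fintype.card_fun]
        simp
      rw [hcard] at hlt
      rw [mul_div_cancel₀ _ (by positivity : ((2:ℝ))^(k+1) ≠ 0)] at hlt
      linarith
    obtain ⟨w, hw⟩ := hpig
    exact ⟨qa w, qb w, hq1 w, hw, hq3 w, hq4 w⟩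
  choose Ca Cb hC1 hC2 hC3 hC4 using hsmall
  -- block start times
  set sfun : ℕ → ℕ := fun k => Nat.rec 0 (fun k ih => ih + (k+2)) k with hsfun
  have hsS : ∀ k, sfun (k+1) = sfun k + (k+2) := fun k => rfl
  have hs0 : sfun 0 = 0 := rfl
  have hsmono : StrictMono sfun := strictMono_nat_of_lt_succ (fun k => by rw [hsS]; omega)
  have hsk : ∀ k, k ≤ sfun k := by
    intro k
    induction k with
    | zero => omega
    | succ n ih => rw [hsS]; omega
  -- block index
  set Kf : ℕ → ℕ := fun m => Nat.findGreatest (fun k => sfun k ≤ m) m with hKf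
  have hK1 : ∀ m, sfun (Kf m) ≤ m := fun m =>
    Nat.findGreatest_spec (P := fun k => sfun k ≤ m) (Nat.zero_le m)
      (Nat.zero_le m : sfun 0 ≤ m)
  have hK2 : ∀ m, m < sfun (Kf m + 1) := by
    intro m
    by_contra h
    push_neg at h
    have hle : Kf m + 1 ≤ m := le_trans (hsk (Kf m + 1)) h
    exact Nat.findGreatest_is_greatest (P := fun k => sfun k ≤ m) (Nat.lt_succ_self _) hle h
  have hKuniq : ∀ m k, sfun k ≤ m → m < sfun (k+1) → Kf m = k := by
    intro m k h1 h2
    rcases lt_trichotomy (Kf m) k with h | h | h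
    · exfalso
      have hmo : sfun (Kf m + 1) ≤ sfun k := hsmono.monotone (Nat.succ_le_of_lt h)
      have := hK2 m
      omega
    · exact h
    · exfalso
      have hmo : sfun (k + 1) ≤ sfun (Kf m) := hsmono.monotone (Nat.succ_le_of_lt h)
      have := hK1 m
      omega
  -- itinerary
  set Jit : (ℕ → Bool) → ℕ → Set ℝ := fun a m =>
    if m = sfun (Kf m) then Icc (LtA (a (Kf m))) (LtB (a (Kf m)))
    else g^[m - sfun (Kf m) - 1] '' Icc (Ca (Kf m)) (Cb (Kf m)) with hJit
  have hJlet : ∀ a m, m = sfun (Kf m) →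
      Jit a m = Icc (LtA (a (Kf m))) (LtB (a (Kf m))) := by
    intro a m h
    simp only [hJit]
    rw [if_pos h]
  have hJoff : ∀ a m, m ≠ sfun (Kf m) →
      Jit a m = g^[m - sfun (Kf m) - 1] '' Icc (Ca (Kf m)) (Cb (Kf m)) := by
    intro a m h
    simp only [hJit]
    rw [if_neg h]
  have hJ1 : ∀ a k, Jit a (sfun k) = Icc (LtA (a k)) (LtB (a k)) := by
    intro a k
    have hK : Kf (sfun k) = k := hKuniq _ _ le_rfl (hsmono (Nat.lt_succ_self k))
    rw [hJlet a (sfun k) (by rw [hK]), hK]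
  have hJ2 : ∀ a k, Jit a (sfun k + 1) = Icc (Ca k) (Cb k) := by
    intro a k
    have hK : Kf (sfun k + 1) = k := hKuniq _ _ (Nat.le_succ _) (by rw [hsS]; omega)
    rw [hJoff a (sfun k + 1) (by rw [hK]; omega), hK,
      show sfun k + 1 - sfun k - 1 = 0 by omega]
    simp
  have hJI : ∀ a m, ∃ c d : ℝ, c ≤ d ∧ Jit a m = Icc c d := by
    intro a m
    by_cases h : m = sfun (Kf m)
    · rw [hJlet a m h]
      exact ⟨_, _, (hLt _).1, rfl⟩
    · rw [hJoff a m h]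
      exact ((imInt hg hgm (hC1 (Kf m)) ((hC3 (Kf m)).trans hI01) _).1)
  have hJs : ∀ a m, Jit a m ⊆ Icc 0 1 := by
    intro a m
    by_cases h : m = sfun (Kf m)
    · rw [hJlet a m h]
      exact ((hLt _).2.1).trans hI01
    · rw [hJoff a m h]
      exact (imInt hg hgm (hC1 (Kf m)) ((hC3 (Kf m)).trans hI01) _).2
  have hgim : ∀ (X : Set ℝ) (j : ℕ), g^[j+1] '' X = g '' (g^[j] '' X) := by
    intro X j
    rw [Function.iterate_succ', Set.image_comp]
  have hJcov : ∀ a m, Jit a (m+1) ⊆ g '' Jit a m := by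
    intro a m
    have h1 := hK1 m
    have h2 := hK2 m
    by_cases hend : m + 1 = sfun (Kf m + 1)
    · -- boundary into a new letter
      have hK' : Kf (m+1) = Kf m + 1 :=
        hKuniq _ _ (le_of_eq hend.symm) (by rw [hsS (Kf m + 1)]; omega)
      have hsSk := hsS (Kf m)
      have hmne : m ≠ sfun (Kf m) := by omega
      have hoff : m - sfun (Kf m) - 1 = Kf m := by omega
      rw [hJlet a (m+1) (by rw [hK']; omega), hJoff a m hmne, hoff, ← hgim, hC4]
      exact (hLt _).2.1
    · -- inside a block
      have hlt : m + 1 < sfun (Kf m + 1) := by omega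
      have hK' : Kf (m+1) = Kf m := hKuniq _ _ (by omega) hlt
      by_cases hm : m = sfun (Kf m)
      · -- from letter into C-interval
        have he1 : Jit a (m+1) = Icc (Ca (Kf m)) (Cb (Kf m)) := by
          rw [hJoff a (m+1) (by rw [hK']; omega), hK',
            show m + 1 - sfun (Kf m) - 1 = 0 by omega]
          simp
        rw [he1, hJlet a m hm, (hLt _).2.2]
        exact hC3 (Kf m)
      · -- iterate the C-interval
        have hoff : m + 1 - sfun (Kf (m+1)) - 1 = (m - sfun (Kf m) - 1) + 1 := by
          rw [hK']; omega
        rw [hJoff a (m+1) (by rw [hK']; omega), hoff, hK', hgim, hJoff a m hm]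
  -- pick points following itineraries
  have hex : ∀ a : ℕ → Bool, ∃ x, ∀ m, g^[m] x ∈ Jit a m :=
    fun a => itinerary hg hgm (Jit a) (hJI a) (hJs a) (hJcov a)
  choose Xp hXp using hex
  -- spreading map
  set phi : (ℕ → Bool) → (ℕ → Bool) := fun t k => t (Nat.unpair k).1 with hphi
  set Y : (ℕ → Bool) → ℝ := fun t => Xp (phi t) with hY
  -- membership of orbits in [0,1]
  have hYmem : ∀ t, Y t ∈ Icc (0:ℝ) 1 := by
    intro t
    have := hXp (phi t) 0
    simp only [Function.iterate_zero, id_eq] at this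
    exact hJs (phi t) 0 this
  -- letters at block starts
  have hlet : ∀ t k, g^[sfun k] (Y t) ∈ Icc (LtA (phi t k)) (LtB (phi t k)) := by
    intro t k
    have := hXp (phi t) (sfun k)
    rwa [hJ1] at this
  have hCk : ∀ t k, g^[sfun k + 1] (Y t) ∈ Icc (Ca k) (Cb k) := by
    intro t k
    have := hXp (phi t) (sfun k + 1)
    rwa [hJ2] at this
  -- separation at indices where the phi-sequences differ
  have hsep2 : ∀ t t' k, phi t k ≠ phi t' k →
      δ₁ ≤ |g^[sfun k] (Y t) - g^[sfun k] (Y t')| := by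
    intro t t' k hk
    have h1 := hlet t k
    have h2 := hlet t' k
    cases hb : phi t k <;> cases hb' : phi t' k <;> rw [hb] at h1 <;> rw [hb'] at h2
    · exact absurd (hb.trans hb'.symm) hk
    · simp only [hLtA, hLtB, Bool.false_eq_true, if_false, if_true, ite_true, ite_false] at h1 h2
      exact hsep _ h1 _ h2
    · simp only [hLtA, hLtB, Bool.false_eq_true, if_false, if_true, ite_true, ite_false] at h1 h2
      have := hsep _ h2 _ h1
      rwa [abs_sub_comm] at this
    · exact absurd (hb.trans hb'.symm) hk
  -- given distinct t t', the phi sequences differ at arbitrarily large k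
  have hdiff : ∀ t t' : ℕ → Bool, t ≠ t' → ∀ N : ℕ, ∃ k ≥ N, phi t k ≠ phi t' k := by
    intro t t' htt N
    obtain ⟨j, hj⟩ := Function.ne_iff.mp htt
    refine ⟨Nat.pair j N, Nat.right_le_pair j N, ?_⟩
    simp only [hphi, Nat.unpair_pair]
    exact hj
  -- injectivity of Y
  have hYinj : Function.Injective Y := by
    intro t t' hEq
    by_contra htt
    obtain ⟨k, _, hk⟩ := hdiff t t' htt 0
    have := hsep2 t t' k hk
    rw [hEq, sub_self, abs_zero] at this
    linarith
  refine ⟨Set.range Y, ?_, ?_, ?_⟩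
  · rintro x ⟨t, rfl⟩
    exact hYmem t
  · -- uncountability
    intro hc
    rw [← Set.countable_coe_iff] at hc
    have hc2 : Countable (ℕ → Bool) := by
      have hinj : Function.Injective (fun t => (⟨Y t, Set.mem_range_self t⟩ : Set.range Y)) :=
        fun t t' h => hYinj (congrArg Subtype.val h)
      exact hinj.countable
    obtain ⟨e, he⟩ := exists_surjective_nat (ℕ → Bool)
    obtain ⟨n, hn⟩ := he (fun k => !(e k k))
    have := congrFun hn n
    simp at this
  · -- scrambled pairs
    rintro x ⟨t, rfl⟩ y ⟨t', rfl⟩ hxy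
    have htt : t ≠ t' := fun h => hxy (by rw [h])
    -- orbits in [0,1]
    have horb : ∀ w : ℝ, w ∈ Icc (0:ℝ) 1 → ∀ i : ℕ, f^[i] w ∈ Icc (0:ℝ) 1 :=
      fun w hw i => (hmap.iterate i) hw
    have hbdd : ∀ i : ℕ, |f^[i] (Y t) - f^[i] (Y t')| ≤ 1 := by
      intro i
      have h1 := horb _ (hYmem t) i
      have h2 := horb _ (hYmem t') i
      rw [abs_le]
      constructor <;> [linarith [h1.1, h2.2]; linarith [h1.2, h2.1]]
    have hBU : IsBoundedUnder (· ≤ ·) atTop (fun i => |f^[i] (Y t) - f^[i] (Y t')|) :=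
      isBoundedUnder_of ⟨1, fun i => hbdd i⟩
    have hBL : IsBoundedUnder (· ≥ ·) atTop (fun i => |f^[i] (Y t) - f^[i] (Y t')|) :=
      isBoundedUnder_of ⟨0, fun i => abs_nonneg _⟩
    -- conversion between f and g iterates
    have hconv : ∀ (w : ℝ) (m : ℕ), f^[(p+1) * m] w = g^[m] w := by
      intro w m
      rw [Function.iterate_mul]
    constructor
    · -- liminf = 0
      have hge : (0:ℝ) ≤ liminf (fun i => |f^[i] (Y t) - f^[i] (Y t')|) atTop :=
        le_liminf_of_le (hBU.isCoboundedUnder_ge)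
          (Filter.Eventually.of_forall (fun i => abs_nonneg _))
      have hle : ∀ ε : ℝ, 0 < ε →
          liminf (fun i => |f^[i] (Y t) - f^[i] (Y t')|) atTop ≤ ε := by
        intro ε hε
        refine liminf_le_of_frequently_le ?_ hBL
        rw [Filter.frequently_atTop]
        intro N
        -- choose k large
        obtain ⟨n, hn⟩ := pow_unbounded_of_one_lt ((v-u)/ε) (one_lt_two (α := ℝ))
        set k := max N n with hk
        refine ⟨(p+1) * (sfun k + 1), ?_, ?_⟩
        · calc N ≤ k := le_max_left _ _
            _ ≤ sfun k := hsk k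
            _ ≤ sfun k + 1 := Nat.le_succ _
            _ ≤ (p+1) * (sfun k + 1) := Nat.le_mul_of_pos_left _ (by omega)
        · have h1 := hCk t k
          have h2 := hCk t' k
          rw [hconv, hconv]
          have hdd : Cb k - Ca k ≤ ε := by
            refine (hC2 k).trans ?_
            have h2n : (2:ℝ)^n ≤ 2^(k+1) :=
              pow_le_pow_right₀ (by norm_num) (by omega)
            have hpos : (0:ℝ) < 2^(k+1) := by positivity
            rw [div_le_iff₀ hpos, mul_comm]
            have hvu : v - u < 2^(k+1) * ε := by
              have h3 := lt_of_lt_of_le hn h2n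
              rw [div_lt_iff₀ hε] at h3
              linarith
            linarith
          rw [abs_le]
          constructor <;> [linarith [h1.1, h2.2]; linarith [h1.2, h2.1]]
      refine le_antisymm ?_ hge
      refine le_of_forall_pos_le_add (fun ε hε => ?_)
      rw [zero_add]
      exact hle ε hε
    · -- limsup > 0
      refine lt_of_lt_of_le hδ₁ (le_limsup_of_frequently_le ?_ hBU)
      rw [Filter.frequently_atTop]
      intro N
      obtain ⟨k, hkN, hk⟩ := hdiff t t' htt N
      refine ⟨(p+1) * sfun k, ?_, ?_⟩
      · calc N ≤ k := hkN
          _ ≤ sfun k := hsk k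
          _ ≤ (p+1) * sfun k := Nat.le_mul_of_pos_left _ (by omega)
      · rw [hconv, hconv]
        exact hsep2 t t' k hk
end
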